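/- Let α > 0, β > 0, c ∈ ℝ, and define g(t) = ∑_{j=0}^∞ (−c)^j t^{αj+β−1} / Γ(αj + β) for t > 0, where Γ is the Euler Gamma function. Then for every t > 0, g is differentiable at t and g'(t) = ∑_{j=0}^∞ (−c)^j (αj + β − 1) t^{αj+β−2} / Γ(αj + β). -/

import Mathlib

open Real Set Filter Topology

/-- From log-convexity of Γ: for `x ≥ 2` and `0 < a ≤ 1`,
`Γ x * (x - 1) ^ a ≤ Γ (x + a)`. -/
lemma gamma_mul_rpow_le (x a : ℝ) (hx : 2 ≤ x) (ha : 0 < a) (ha1 : a ≤ 1) :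
    Real.Gamma x * (x - 1) ^ a ≤ Real.Gamma (x + a) := by
  set y := x + a - 1 with hy
  have hy1 : (1 : ℝ) ≤ y := by simp only [hy]; linarith
  have hy0 : 0 < y := by linarith
  have hx0 : (0 : ℝ) < x := by linarith
  have hxa0 : 0 < x + a := by linarith
  have hΓy : 0 < Real.Gamma y := Real.Gamma_pos_of_pos hy0
  have hΓx : 0 < Real.Gamma x := Real.Gamma_pos_of_pos hx0
  have hΓxa : 0 < Real.Gamma (x + a) := Real.Gamma_pos_of_pos hxa0
  have hconv := Real.convexOn_log_Gamma.2 (mem_Ioi.2 hy0) (mem_Ioi.2 hxa0)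
    ha.le (by linarith : (0:ℝ) ≤ 1 - a) (by ring)
  have hcomb : a • y + (1 - a) • (x + a) = x := by
    simp only [smul_eq_mul, hy]; ring
  rw [hcomb] at hconv
  simp only [Function.comp, smul_eq_mul] at hconv
  have hrec : Real.Gamma (x + a) = y * Real.Gamma y := by
    have h := Real.Gamma_add_one (s := y) hy0.ne'
    rw [show y + 1 = x + a by simp only [hy]; ring] at h
    exact h
  have hlogrec : Real.log (Real.Gamma y) = Real.log (Real.Gamma (x + a)) - Real.log y := by
    rw [hrec, Real.log_mul hy0.ne' hΓy.ne']; ring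
  rw [hlogrec] at hconv
  have hylog : Real.log (Real.Gamma x * y ^ a) ≤ Real.log (Real.Gamma (x + a)) := by
    rw [Real.log_mul hΓx.ne' (Real.rpow_pos_of_pos hy0 a).ne', Real.log_rpow hy0]
    nlinarith [hconv]
  have hmain : Real.Gamma x * y ^ a ≤ Real.Gamma (x + a) := by
    have h := Real.exp_le_exp.2 hylog
    rwa [Real.exp_log (by positivity), Real.exp_log hΓxa] at h
  refine le_trans ?_ hmain
  have hle : (x - 1 : ℝ) ^ a ≤ y ^ a :=
    Real.rpow_le_rpow (by linarith) (by simp only [hy]; linarith) ha.le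
  exact mul_le_mul_of_nonneg_left hle hΓx.le

/-- Master summability lemma. -/
lemma summable_aux (α β γ q : ℝ) (hα : 0 < α) (hβ : 0 < β) :
    Summable (fun j : ℕ => q ^ j * (α * j + γ) / Real.Gamma (α * j + β)) := by
  set a := min α 1 with haa
  have ha0 : 0 < a := lt_min hα one_pos
  have ha1 : a ≤ 1 := min_le_right _ _
  have haα : a ≤ α := min_le_left _ _
  apply summable_of_ratio_norm_eventually_le (r := 1/2) (by norm_num)
  have h1 : Tendsto (fun j : ℕ => α * j + β) atTop atTop := by
    apply tendsto_atTop_add_const_right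
    exact (tendsto_natCast_atTop_atTop (R := ℝ)).const_mul_atTop hα
  have h2 : Tendsto (fun j : ℕ => α * j + γ) atTop atTop := by
    apply tendsto_atTop_add_const_right
    exact (tendsto_natCast_atTop_atTop (R := ℝ)).const_mul_atTop hα
  have h3 : Tendsto (fun j : ℕ => (α * j + β - 1) ^ a) atTop atTop := by
    apply (tendsto_rpow_atTop ha0).comp
    simpa [sub_eq_add_neg] using tendsto_atTop_add_const_right atTop (-1 : ℝ) h1
  filter_upwards [h1.eventually_ge_atTop 2, h2.eventually_ge_atTop 1,
    h3.eventually_ge_atTop (2 * |q| * (1 + α))] with j hx2 hy1 hP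
  set x := α * (j : ℝ) + β with hxd
  set z := α * (j : ℝ) + γ with hzd
  have hΓx : 0 < Real.Gamma x := Real.Gamma_pos_of_pos (by linarith)
  have hΓxa : 0 < Real.Gamma (x + α) := Real.Gamma_pos_of_pos (by linarith)
  have hkey : Real.Gamma x * (x - 1) ^ a ≤ Real.Gamma (x + α) := by
    refine le_trans (gamma_mul_rpow_le x a hx2 ha0 ha1) ?_
    exact Real.Gamma_strictMonoOn_Ici.monotoneOn (mem_Ici.2 (by linarith))
      (mem_Ici.2 (by linarith)) (by linarith)
  have g1 : α * ((j : ℝ) + 1) + β = x + α := by rw [hxd]; ring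
  have g2 : α * ((j : ℝ) + 1) + γ = z + α := by rw [hzd]; ring
  have hz0 : (0 : ℝ) < z := by linarith
  have hza : (0 : ℝ) < z + α := by linarith
  push_cast
  rw [g1, g2, Real.norm_eq_abs, Real.norm_eq_abs, abs_div, abs_div, abs_mul, abs_mul,
    abs_pow, abs_pow, abs_of_pos hz0, abs_of_pos hza, abs_of_pos hΓx, abs_of_pos hΓxa]
  -- key scalar inequality
  have hstep : |q| * (z + α) * Real.Gamma x ≤ 1/2 * z * Real.Gamma (x + α) := by
    have hz1 : (1 : ℝ) ≤ z := hy1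
    have e1 : 1/2 * z * (Real.Gamma x * (x - 1) ^ a) ≤ 1/2 * z * Real.Gamma (x + α) :=
      mul_le_mul_of_nonneg_left hkey (by linarith)
    have e2 : 1/2 * z * (Real.Gamma x * (2 * |q| * (1 + α))) ≤
        1/2 * z * (Real.Gamma x * (x - 1) ^ a) :=
      mul_le_mul_of_nonneg_left (mul_le_mul_of_nonneg_left hP hΓx.le) (by linarith)
    have e3 : 1/2 * z * (Real.Gamma x * (2 * |q| * (1 + α))) = |q| * ((1 + α) * z) * Real.Gamma x := by
      ring
    have e4 : |q| * (z + α) * Real.Gamma x ≤ |q| * ((1 + α) * z) * Real.Gamma x := by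
      apply mul_le_mul_of_nonneg_right _ hΓx.le
      apply mul_le_mul_of_nonneg_left _ (abs_nonneg q)
      nlinarith
    calc |q| * (z + α) * Real.Gamma x
        ≤ |q| * ((1 + α) * z) * Real.Gamma x := e4
      _ = 1/2 * z * (Real.Gamma x * (2 * |q| * (1 + α))) := e3.symm
      _ ≤ 1/2 * z * (Real.Gamma x * (x - 1) ^ a) := e2
      _ ≤ 1/2 * z * Real.Gamma (x + α) := e1
  have hfin : |q| * (z + α) ≤ 1/2 * z * Real.Gamma (x + α) / Real.Gamma x :=
    (le_div_iff₀ hΓx).2 hstep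
  calc |q| ^ (j + 1) * (z + α) / Real.Gamma (x + α)
      = |q| ^ j * (|q| * (z + α)) / Real.Gamma (x + α) := by rw [pow_succ]; ring
    _ ≤ |q| ^ j * (1/2 * z * Real.Gamma (x + α) / Real.Gamma x) / Real.Gamma (x + α) := by
        apply div_le_div_of_nonneg_right ?_ hΓxa.le
        · exact mul_le_mul_of_nonneg_left hfin (pow_nonneg (abs_nonneg q) j)
    _ = 1/2 * (|q| ^ j * z / Real.Gamma x) := by field_simp

theorem mittagLeffler_time_factor_deriv
    (α β c : ℝ) (hα : 0 < α) (hβ : 0 < β)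
    (g : ℝ → ℝ)
    (hg : ∀ t : ℝ, 0 < t →
      g t = ∑' j : ℕ, (-c) ^ j * t ^ (α * j + β - 1) / Real.Gamma (α * j + β)) :
    ∀ t : ℝ, 0 < t →
      DifferentiableAt ℝ g t ∧
      deriv g t = ∑' j : ℕ, (-c) ^ j * (α * j + β - 1) * t ^ (α * j + β - 2) /
        Real.Gamma (α * j + β) := by
  intro t ht
  have hb : (0 : ℝ) < 2 * t := by linarith
  have hts : t ∈ Ioo (t/2) (2*t) := ⟨by linarith, by linarith⟩
  set D : ℝ := max ((t/2) ^ (β-2)) ((2*t) ^ (β-2)) with hD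
  have hD0 : 0 ≤ D := le_trans (Real.rpow_nonneg (by linarith) _) (le_max_left _ _)
  have hu_sum : Summable (fun j : ℕ =>
      D * ((|c| * (2*t) ^ α) ^ j * (α * j + (β+1)) / Real.Gamma (α * j + β))) :=
    (summable_aux α β (β+1) (|c| * (2*t) ^ α) hα hβ).mul_left D
  have key : HasDerivAt
      (fun z : ℝ => ∑' j : ℕ, (-c) ^ j * z ^ (α * j + β - 1) / Real.Gamma (α * j + β))
      (∑' j : ℕ, (-c) ^ j * (α * j + β - 1) * t ^ (α * j + β - 2) / Real.Gamma (α * j + β))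
      t := by
    refine hasDerivAt_tsum_of_isPreconnected hu_sum isOpen_Ioo
      (convex_Ioo _ _).isPreconnected
      (g := fun (j : ℕ) (z : ℝ) => (-c) ^ j * z ^ (α * j + β - 1) / Real.Gamma (α * j + β))
      (g' := fun (j : ℕ) (z : ℝ) =>
        (-c) ^ j * (α * j + β - 1) * z ^ (α * j + β - 2) / Real.Gamma (α * j + β))
      ?_ ?_ hts ?_ hts
    · -- derivatives
      intro j x hx
      have hx0 : 0 < x := lt_trans (by linarith) hx.1
      have H := ((Real.hasDerivAt_rpow_const (x := x) (p := α * j + β - 1)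
        (Or.inl hx0.ne')).const_mul ((-c) ^ j)).div_const (Real.Gamma (α * j + β))
      refine H.congr_deriv ?_
      rw [show α * (j : ℝ) + β - 1 - 1 = α * j + β - 2 by ring]
      ring
    · -- bound
      intro j x hx
      have hx0 : 0 < x := lt_trans (by linarith) hx.1
      have hΓ : 0 < Real.Gamma (α * j + β) := Real.Gamma_pos_of_pos (by positivity)
      have hαj : (0 : ℝ) ≤ α * j := by positivity
      rw [Real.norm_eq_abs, abs_div, abs_mul, abs_mul, abs_pow, abs_neg,
        abs_of_pos (Real.rpow_pos_of_pos hx0 _), abs_of_pos hΓ]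
      have b1 : |α * (j : ℝ) + β - 1| ≤ α * j + β + 1 := by
        rw [abs_le]; constructor <;> linarith
      have b2 : x ^ (α * (j : ℝ) + β - 2) ≤ ((2*t) ^ α) ^ j * D := by
        have hsplit : x ^ (α * (j : ℝ) + β - 2) = x ^ (α * (j : ℝ)) * x ^ (β - 2) := by
          rw [← Real.rpow_add hx0]; ring_nf
        rw [hsplit]
        have c1 : x ^ (α * (j : ℝ)) ≤ ((2*t) ^ α) ^ j := by
          rw [← Real.rpow_natCast ((2*t) ^ α) j, ← Real.rpow_mul hb.le]
          exact Real.rpow_le_rpow hx0.le hx.2.le (by positivity)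
        have c2 : x ^ (β - 2) ≤ D := by
          rcases le_or_gt 0 (β - 2) with h | h
          · exact le_trans (Real.rpow_le_rpow hx0.le hx.2.le h) (le_max_right _ _)
          · exact le_trans (Real.rpow_le_rpow_of_nonpos (by linarith) hx.1.le h.le)
              (le_max_left _ _)
        exact mul_le_mul c1 c2 (Real.rpow_nonneg hx0.le _) (by positivity)
      calc |c| ^ j * |α * (j : ℝ) + β - 1| * x ^ (α * (j : ℝ) + β - 2) / Real.Gamma (α * j + β)
          ≤ |c| ^ j * (α * j + β + 1) * (((2*t) ^ α) ^ j * D) / Real.Gamma (α * j + β) := by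
            apply div_le_div_of_nonneg_right ?_ hΓ.le
            exact mul_le_mul (mul_le_mul_of_nonneg_left b1 (pow_nonneg (abs_nonneg c) j)) b2
              (Real.rpow_nonneg hx0.le _)
              (mul_nonneg (pow_nonneg (abs_nonneg c) j) (by linarith))
        _ = D * ((|c| * (2*t) ^ α) ^ j * (α * j + (β+1)) / Real.Gamma (α * j + β)) := by
            rw [mul_pow]; ring
    · -- summable at t
      apply Summable.of_norm_bounded (show Summable
        (fun j : ℕ => t ^ (β-1) * ((|c| * t ^ α) ^ j * (α * j + (β+1)) / Real.Gamma (α * j + β))) from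
        ((summable_aux α β (β+1) (|c| * t ^ α) hα hβ).mul_left _))
      intro j
      have hΓ : 0 < Real.Gamma (α * j + β) := Real.Gamma_pos_of_pos (by positivity)
      have hαj : (0 : ℝ) ≤ α * j := by positivity
      rw [Real.norm_eq_abs, abs_div, abs_mul, abs_pow, abs_neg,
        abs_of_pos (Real.rpow_pos_of_pos ht _), abs_of_pos hΓ]
      have hsplit : t ^ (α * (j : ℝ) + β - 1) = (t ^ α) ^ j * t ^ (β - 1) := by
        rw [show α * (j : ℝ) + β - 1 = α * (j : ℝ) + (β - 1) by ring, Real.rpow_add ht,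
          Real.rpow_mul ht.le, Real.rpow_natCast]
      rw [hsplit]
      have h1 : (1 : ℝ) ≤ α * j + (β + 1) := by linarith
      calc |c| ^ j * ((t ^ α) ^ j * t ^ (β-1)) / Real.Gamma (α * j + β)
          ≤ |c| ^ j * ((t ^ α) ^ j * t ^ (β-1)) * (α * j + (β+1)) / Real.Gamma (α * j + β) := by
            apply div_le_div_of_nonneg_right ?_ hΓ.le
            nlinarith [pow_nonneg (abs_nonneg c) j, Real.rpow_nonneg ht.le (β-1),
              pow_nonneg (Real.rpow_nonneg ht.le α) j,
              mul_nonneg (pow_nonneg (abs_nonneg c) j)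
                (mul_nonneg (pow_nonneg (Real.rpow_nonneg ht.le α) j)
                  (Real.rpow_nonneg ht.le (β-1)))]
        _ = t ^ (β-1) * ((|c| * t ^ α) ^ j * (α * j + (β+1)) / Real.Gamma (α * j + β)) := by
            rw [mul_pow]; ring
  have hev : g =ᶠ[𝓝 t]
      (fun z : ℝ => ∑' j : ℕ, (-c) ^ j * z ^ (α * j + β - 1) / Real.Gamma (α * j + β)) :=
    Filter.eventuallyEq_of_mem (Ioi_mem_nhds ht) (fun x hx => hg x hx)
  have H := key.congr_of_eventuallyEq hev
  exact ⟨H.differentiableAt, H.deriv⟩
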